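/- arXiv:2210.01530 — 3 statements merged into one kernel-verified Lean document; each statement's English description precedes it below -/
import Mathlib

section
/- Let the pair (A, B), with A ∈ ℝⁿˣⁿ and B ∈ ℝⁿˣᵐ, be controllable, and let ñ be the minimal natural number such that rank[B, AB, …, A^{ñ−1}B] = n. Then any solution Y₀ ∈ ℝᵐˣⁿ, G₀ ∈ ℝⁿˣⁿ of the linear algebraic equations A G₀ − G₀ A + B Y₀ = A and G₀ B = 0 is such that: (i) the matrix G₀ − Iₙ is invertible; (ii) for every μ ∈ [−1, 1/ñ], the matrix G_d = Iₙ + μG₀ is anti-Hurwitz (every eigenvalue of G_d has positive real part); (iii) the matrix A₀ = A + B Y₀ (G₀ − Iₙ)^{−1} satisfies the identities A₀ G_d = (G_d + μIₙ) A₀ and G_d B = B. -/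
/-!
STATEMENT 5 (Theorem 3, part 1): for a controllable pair `(A, B)`, any solution
`(Y₀, G₀)` of `A G₀ - G₀ A + B Y₀ = A`, `G₀ B = 0` satisfies: `G₀ - I` is invertible;
`G_d = I + μ G₀` is anti-Hurwitz for all `μ ∈ [-1, 1/ñ]`; and
`A₀ = A + B Y₀ (G₀ - I)⁻¹` satisfies `A₀ G_d = (G_d + μ I) A₀` and `G_d B = B`.
-/

open Matrix

noncomputable section

/-- `G` is anti-Hurwitz: every (complex) eigenvalue of `G` has positive real part. -/
def AntiHurwitz {n : ℕ} (G : Matrix (Fin n) (Fin n) ℝ) : Prop :=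
  ∀ z : ℂ, (G.map (algebraMap ℝ ℂ)).charpoly.IsRoot z → 0 < z.re

/-- The block matrix `[B, AB, …, A^{k-1}B]`. -/
def ctrbMat {n m : ℕ} (A : Matrix (Fin n) (Fin n) ℝ) (B : Matrix (Fin n) (Fin m) ℝ)
    (k : ℕ) : Matrix (Fin n) (Fin k × Fin m) ℝ :=
  Matrix.of fun i p => (A ^ (p.1 : ℕ) * B) i p.2

/-- The (ordered) product `(G + 0)·(G + 1)⋯(G + (N-1))`. -/
def fallProd {n : ℕ} {K : Type*} [CommRing K] (G : Matrix (Fin n) (Fin n) K) : ℕ →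
    Matrix (Fin n) (Fin n) K
  | 0 => 1
  | (N + 1) => fallProd G N * (G + (N : K) • 1)

lemma fallProd_mulVec_eig {n : ℕ} {K : Type*} [Field K] (G : Matrix (Fin n) (Fin n) K)
    (v : Fin n → K) (w : K) (hv : G *ᵥ v = w • v) (N : ℕ) :
    (fallProd G N) *ᵥ v = (∏ k ∈ Finset.range N, (w + (k : K))) • v := by
  induction N with
  | zero => simp [fallProd]
  | succ N ih =>
      rw [fallProd, Finset.prod_range_succ, ← Matrix.mulVec_mulVec,
        Matrix.add_mulVec, hv, Matrix.smul_mulVec, Matrix.one_mulVec,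
        ← add_smul, Matrix.mulVec_smul, ih, smul_smul, mul_comm]

lemma charpoly_root_det {n : ℕ} (M : Matrix (Fin n) (Fin n) ℂ) (z : ℂ)
    (h : M.charpoly.IsRoot z) : (z • (1 : Matrix (Fin n) (Fin n) ℂ) - M).det = 0 := by
  have h' : (Polynomial.evalRingHom z) M.charpoly = 0 := h
  rw [Matrix.charpoly, RingHom.map_det] at h'
  rw [← h']
  congr 1
  ext i j
  by_cases hij : i = j
  · subst hij
    simp [charmatrix_apply_eq, Matrix.one_apply, Matrix.sub_apply]
  · simp [charmatrix_apply_ne _ _ _ hij, Matrix.one_apply_ne hij, Matrix.sub_apply]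

theorem homogeneous_design_part1
    {n m : ℕ} (A : Matrix (Fin n) (Fin n) ℝ) (B : Matrix (Fin n) (Fin m) ℝ)
    -- the pair `(A, B)` is controllable:
    (hctrb : (ctrbMat A B n).rank = n)
    -- `ñ` is the minimal natural number with `rank [B, AB, …, A^{ñ-1}B] = n`:
    (ntil : ℕ) (hntil : (ctrbMat A B ntil).rank = n ∧ ∀ k < ntil, (ctrbMat A B k).rank ≠ n)
    -- `(Y₀, G₀)` solves the linear algebraic equations:
    (Y₀ : Matrix (Fin m) (Fin n) ℝ) (G₀ : Matrix (Fin n) (Fin n) ℝ)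
    (heq : A * G₀ - G₀ * A + B * Y₀ = A) (hGB : G₀ * B = 0) :
    -- (i) `G₀ - I` is invertible:
    IsUnit (G₀ - 1) ∧
    -- (ii) `G_d = I + μ G₀` is anti-Hurwitz for every `μ ∈ [-1, 1/ñ]`:
    (∀ μ : ℝ, μ ∈ Set.Icc (-1 : ℝ) ((ntil : ℝ)⁻¹) → AntiHurwitz (1 + μ • G₀)) ∧
    -- (iii) `A₀ = A + B Y₀ (G₀ - I)⁻¹` satisfies the identities:
    (∀ μ : ℝ, μ ∈ Set.Icc (-1 : ℝ) ((ntil : ℝ)⁻¹) →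
      (A + B * Y₀ * (G₀ - 1)⁻¹) * (1 + μ • G₀) =
        ((1 + μ • G₀) + μ • (1 : Matrix (Fin n) (Fin n) ℝ)) * (A + B * Y₀ * (G₀ - 1)⁻¹) ∧
      (1 + μ • G₀) * B = B) := by
  -- the commutation relation `G₀ A = A G₀ + B Y₀ - A`
  have hGA : G₀ * A = A * G₀ + B * Y₀ - A := by
    have h' : G₀ * A = A * G₀ + B * Y₀ - (A * G₀ - G₀ * A + B * Y₀) := by noncomm_ring
    rw [heq] at h'
    exact h'
  -- Step 1: `G₀ A^j B = -j A^j B + (lower-order columns)`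
  have key0 : ∀ j : ℕ, ∃ C : ℕ → Matrix (Fin m) (Fin m) ℝ,
      G₀ * (A ^ j * B) = (-(j : ℝ)) • (A ^ j * B)
        + ∑ i ∈ Finset.range j, A ^ i * B * C i := by
    intro j
    induction j with
    | zero => exact ⟨0, by simp [← Matrix.mul_assoc, hGB]⟩
    | succ j ih =>
        obtain ⟨C, hC⟩ := ih
        refine ⟨fun i => if i = 0 then Y₀ * (A ^ j * B) else C (i - 1), ?_⟩
        have hp : A ^ (j + 1) * B = A * (A ^ j * B) := by
          rw [pow_succ', Matrix.mul_assoc]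
        have step : G₀ * (A ^ (j + 1) * B)
            = A * (G₀ * (A ^ j * B)) + B * (Y₀ * (A ^ j * B)) - A * (A ^ j * B) := by
          rw [hp, ← Matrix.mul_assoc, hGA, Matrix.sub_mul, Matrix.add_mul,
            Matrix.mul_assoc, Matrix.mul_assoc]
        rw [step, hC, Matrix.mul_add, Matrix.mul_smul, Matrix.mul_sum]
        rw [Finset.sum_range_succ']
        simp only [Nat.succ_ne_zero, Nat.add_sub_cancel, if_false, if_true, ite_false,
          ite_true, eq_self_iff_true, pow_zero, Matrix.one_mul]
        have h1 : ∀ i ∈ Finset.range j,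
            A * (A ^ i * B * C i) = A ^ (i + 1) * B * C i := by
          intro i _
          rw [← Matrix.mul_assoc, ← Matrix.mul_assoc, ← pow_succ']
        rw [Finset.sum_congr rfl h1, ← hp]
        push_cast
        module
  -- Step 2: the falling product annihilates all columns of the controllability matrix
  have key1 : ∀ j : ℕ, ∀ i < j, fallProd G₀ j * (A ^ i * B) = 0 := by
    intro j
    induction j with
    | zero => intro i hi; exact absurd hi (Nat.not_lt_zero i)
    | succ j ih =>
        intro i hi
        obtain ⟨C, hC⟩ := key0 i
        have expand : (G₀ + (j : ℝ) • 1) * (A ^ i * B)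
            = ((j : ℝ) - (i : ℝ)) • (A ^ i * B)
              + ∑ i' ∈ Finset.range i, A ^ i' * B * C i' := by
          rw [Matrix.add_mul, hC, Matrix.smul_mul, Matrix.one_mul]
          module
        rw [fallProd, Matrix.mul_assoc, expand, Matrix.mul_add, Matrix.mul_smul,
          Matrix.mul_sum]
        have h2 : ∀ i' ∈ Finset.range i,
            fallProd G₀ j * (A ^ i' * B * C i') = 0 := by
          intro i' hi'
          have hlt : i' < j := lt_of_lt_of_le (Finset.mem_range.mp hi') (Nat.lt_succ_iff.mp hi)
          rw [← Matrix.mul_assoc, ih i' hlt, Matrix.zero_mul]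
        rw [Finset.sum_congr rfl h2, Finset.sum_const_zero, add_zero]
        rcases eq_or_lt_of_le (Nat.lt_succ_iff.mp hi) with h | h
        · rw [h, sub_self, zero_smul]
        · rw [ih i h, smul_zero]
  -- Step 3: the falling product is zero
  have hM0 : fallProd G₀ ntil = 0 := by
    set Cm := ctrbMat A B ntil with hCm
    have hMC : fallProd G₀ ntil * Cm = 0 := by
      ext i p
      obtain ⟨j, l⟩ := p
      have h : (fallProd G₀ ntil * Cm) i (j, l)
          = (fallProd G₀ ntil * (A ^ (j : ℕ) * B)) i l := by
        simp [Matrix.mul_apply, hCm, ctrbMat]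
      rw [h, key1 ntil (j : ℕ) j.isLt]
      simp
    have hsurj : Function.Surjective Cm.mulVecLin := by
      rw [← LinearMap.range_eq_top]
      apply Submodule.eq_top_of_finrank_eq
      rw [← Matrix.rank, hntil.1, Module.finrank_fin_fun]
    have hall : ∀ y : Fin n → ℝ, fallProd G₀ ntil *ᵥ y = 0 := by
      intro y
      obtain ⟨x, hx⟩ := hsurj y
      rw [← hx]
      show fallProd G₀ ntil *ᵥ (Cm *ᵥ x) = 0
      rw [Matrix.mulVec_mulVec, hMC, Matrix.zero_mulVec]
    ext i j
    have h := congrFun (hall (Pi.single j 1)) i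
    rw [Matrix.mulVec_single] at h
    simpa using h
  -- (i)
  have part1 : IsUnit (G₀ - 1) := by
    by_contra hno
    rw [Matrix.isUnit_iff_isUnit_det, isUnit_iff_ne_zero, not_ne_iff] at hno
    obtain ⟨v, hv0, hv⟩ := (Matrix.exists_mulVec_eq_zero_iff).mpr hno
    have heig : G₀ *ᵥ v = (1 : ℝ) • v := by
      rw [Matrix.sub_mulVec, Matrix.one_mulVec, sub_eq_zero] at hv
      rw [hv, one_smul]
    have h := fallProd_mulVec_eig G₀ v 1 heig ntil
    rw [hM0, Matrix.zero_mulVec] at h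
    have hprod : (∏ k ∈ Finset.range ntil, ((1 : ℝ) + (k : ℝ))) ≠ 0 := by
      apply ne_of_gt
      apply Finset.prod_pos
      intro k _
      positivity
    exact hv0 ((smul_eq_zero.mp h.symm).resolve_left hprod)
  -- the complex falling product is also zero
  have hM0c : fallProd (G₀.map (algebraMap ℝ ℂ)) ntil = 0 := by
    have hmap : ∀ N : ℕ, (fallProd G₀ N).map (algebraMap ℝ ℂ)
        = fallProd (G₀.map (algebraMap ℝ ℂ)) N := by
      intro N
      induction N with
      | zero =>
          show (1 : Matrix (Fin n) (Fin n) ℝ).map (algebraMap ℝ ℂ) = 1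
          ext i j
          by_cases h : i = j <;> simp [Matrix.map_apply, Matrix.one_apply, h]
      | succ N ih =>
          show (fallProd G₀ N * (G₀ + (N : ℝ) • 1)).map (algebraMap ℝ ℂ)
            = fallProd (G₀.map (algebraMap ℝ ℂ)) N
              * (G₀.map (algebraMap ℝ ℂ) + (N : ℂ) • 1)
          rw [Matrix.map_mul, ih]
          congr 1
          ext i j
          by_cases h : i = j <;>
            simp [Matrix.map_apply, Matrix.add_apply, Matrix.smul_apply, Matrix.one_apply, h]
    rw [← hmap, hM0]
    ext i j
    simp [Matrix.map_apply]
  -- (ii)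
  have part2 : ∀ μ : ℝ, μ ∈ Set.Icc (-1 : ℝ) ((ntil : ℝ)⁻¹) → AntiHurwitz (1 + μ • G₀) := by
    intro μ hμ z hz
    set Gc := G₀.map (algebraMap ℝ ℂ) with hGc
    have hmapGd : (1 + μ • G₀).map (algebraMap ℝ ℂ) = 1 + (μ : ℂ) • Gc := by
      ext i j
      by_cases h : i = j <;>
        simp [Matrix.map_apply, Matrix.add_apply, Matrix.smul_apply, Matrix.one_apply, h, hGc]
    rw [hmapGd] at hz
    have hdet := charpoly_root_det _ z hz
    obtain ⟨v, hv0, hv⟩ := (Matrix.exists_mulVec_eq_zero_iff).mpr hdet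
    have heig : (1 + (μ : ℂ) • Gc) *ᵥ v = z • v := by
      rw [Matrix.sub_mulVec, sub_eq_zero] at hv
      rw [← hv, Matrix.smul_mulVec, Matrix.one_mulVec]
    rcases eq_or_ne μ 0 with hμ0 | hμ0
    · subst hμ0
      rw [Complex.ofReal_zero, zero_smul, add_zero, Matrix.one_mulVec] at heig
      have hz0 : (z - 1) • v = 0 := by rw [sub_smul, one_smul, ← heig, sub_self]
      have hz1 : z = 1 :=
        sub_eq_zero.mp ((smul_eq_zero.mp hz0).resolve_right hv0)
      rw [hz1]
      norm_num
    · have hμc : (μ : ℂ) ≠ 0 := by exact_mod_cast hμ0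
      have heigG : Gc *ᵥ v = ((μ : ℂ)⁻¹ * (z - 1)) • v := by
        rw [Matrix.add_mulVec, Matrix.one_mulVec, Matrix.smul_mulVec] at heig
        have h : (μ : ℂ) • (Gc *ᵥ v) = (z - 1) • v := by
          rw [sub_smul, one_smul, ← heig]
          abel
        rw [mul_smul, ← h, smul_smul, inv_mul_cancel₀ hμc, one_smul]
      have h := fallProd_mulVec_eig Gc v _ heigG ntil
      rw [show fallProd Gc ntil = 0 from hM0c, Matrix.zero_mulVec] at h
      have hprod : (∏ k ∈ Finset.range ntil, ((μ : ℂ)⁻¹ * (z - 1) + (k : ℂ))) = 0 :=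
        (smul_eq_zero.mp h.symm).resolve_right hv0
      obtain ⟨k, hk, hk0⟩ := Finset.prod_eq_zero_iff.mp hprod
      have hkn : (k : ℕ) < ntil := Finset.mem_range.mp hk
      have hzval : z = 1 - (μ : ℂ) * (k : ℂ) := by
        field_simp at hk0
        linear_combination hk0
      have hre : z.re = 1 - μ * (k : ℝ) := by
        rw [hzval]
        push_cast
        simp [Complex.sub_re, Complex.mul_re, Complex.ofReal_re, Complex.ofReal_im,
          Complex.natCast_re, Complex.natCast_im]
      rw [hre]
      rcases le_or_gt μ 0 with hμneg | hμpos
      · nlinarith [Nat.cast_nonneg (α := ℝ) k]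
      · have hk1 : (k : ℝ) + 1 ≤ (ntil : ℝ) := by exact_mod_cast hkn
        have hnpos : (0 : ℝ) < (ntil : ℝ) := by
          have : 0 < ntil := (Nat.zero_le k).trans_lt hkn
          exact_mod_cast this
        have hμn : μ * (ntil : ℝ) ≤ 1 := by
          calc μ * (ntil : ℝ) ≤ (ntil : ℝ)⁻¹ * (ntil : ℝ) :=
                mul_le_mul_of_nonneg_right hμ.2 (le_of_lt hnpos)
            _ = 1 := inv_mul_cancel₀ (ne_of_gt hnpos)
        nlinarith [Nat.cast_nonneg (α := ℝ) k]
  -- (iii)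
  have hdetU : IsUnit (G₀ - 1).det := (Matrix.isUnit_iff_isUnit_det _).mp part1
  have hinv2 : (G₀ - 1)⁻¹ * (G₀ - 1) = 1 := Matrix.nonsing_inv_mul _ hdetU
  set K := (G₀ - 1)⁻¹ with hK
  set A₀ := A + B * Y₀ * K with hA₀
  have hKG : K * G₀ = 1 + K := by
    have h : K * G₀ = K * (G₀ - 1) + K := by noncomm_ring
    rw [h, hinv2]
  have hG0A0 : G₀ * A₀ = G₀ * A := by
    rw [hA₀, Matrix.mul_add]
    have h : G₀ * (B * Y₀ * K) = G₀ * B * Y₀ * K := by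
      rw [Matrix.mul_assoc (G₀ * B) Y₀ K, Matrix.mul_assoc G₀ B (Y₀ * K),
        Matrix.mul_assoc B Y₀ K]
    rw [h, hGB, Matrix.zero_mul, Matrix.zero_mul, add_zero]
  have keyA : A₀ * G₀ = G₀ * A₀ + A₀ := by
    have hBYK : B * Y₀ * K * G₀ = B * Y₀ * (K * G₀) := by
      rw [Matrix.mul_assoc (B * Y₀) K G₀]
    rw [hG0A0, hGA, hA₀, Matrix.add_mul, hBYK, hKG]
    noncomm_ring
  clear_value K A₀
  refine ⟨part1, part2, ?_⟩
  intro μ _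
  refine ⟨?_, ?_⟩
  · show A₀ * (1 + μ • G₀) = ((1 + μ • G₀) + μ • 1) * A₀
    rw [Matrix.mul_add, Matrix.mul_one, Matrix.mul_smul, keyA, Matrix.add_mul,
      Matrix.add_mul, Matrix.one_mul, Matrix.smul_mul, Matrix.smul_mul, Matrix.one_mul,
      smul_add]
    abel
  · show (1 + μ • G₀) * B = B
    rw [Matrix.add_mul, Matrix.one_mul, Matrix.smul_mul, hGB, smul_zero, add_zero]
end
end

section
/- Let x ∈ C¹(ℝ, ℝ³) and let J_ℓ(X) = Σ_{n≥0} Xⁿ/(n+1)! denote the left Jacobian. Then at every time t₀ with ‖x(t₀)‖ < 2π, the matrix J_ℓ(x(t₀)^∧) is invertible, and the map t ↦ (J_ℓ(x(t)^∧))^{−1} is differentiable at t₀ with derivative continuous on the open set {t : ‖x(t)‖ < 2π}. -/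
/-!
STATEMENT 16 (Proposition 1): if `x ∈ C¹(ℝ, ℝ³)` then, wherever `‖x(t)‖ < 2π`, the
left Jacobian `J_ℓ(x(t)^∧)` is invertible and `t ↦ (J_ℓ(x(t)^∧))⁻¹` is differentiable,
with derivative continuous on the open set `{t : ‖x(t)‖ < 2π}`.
-/

open Matrix

attribute [local instance] Matrix.normedAddCommGroup Matrix.normedSpace

noncomputable section

/-- The hat map `ℝ³ → 𝔰𝔬(3)`. -/
def hat (x : Fin 3 → ℝ) : Matrix (Fin 3) (Fin 3) ℝ :=
  !![0, -x 2, x 1; x 2, 0, -x 0; -x 1, x 0, 0]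

/-- The left Jacobian `J_ℓ(X) = Σ_{k≥0} Xᵏ/(k+1)!`. -/
def leftJacobian (X : Matrix (Fin 3) (Fin 3) ℝ) : Matrix (Fin 3) (Fin 3) ℝ :=
  ∑' k : ℕ, ((Nat.factorial (k + 1) : ℝ)⁻¹) • X ^ k

namespace LJAux

def ca (k : ℕ) : ℝ := (-1) ^ k * ((Nat.factorial (2 * k + 2) : ℝ))⁻¹
def cb (k : ℕ) : ℝ := (-1) ^ k * ((Nat.factorial (2 * k + 3) : ℝ))⁻¹

def fa (s : ℝ) : ℝ := ∑' k : ℕ, ca k * s ^ k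
def fb (s : ℝ) : ℝ := ∑' k : ℕ, cb k * s ^ k

lemma abs_ca_le (n : ℕ) : |ca n| ≤ ((n.factorial : ℝ))⁻¹ := by
  rw [ca, abs_mul, abs_pow, abs_neg, abs_one, one_pow, one_mul, abs_inv, abs_of_nonneg (by positivity)]
  apply inv_anti₀ (by positivity)
  exact_mod_cast Nat.factorial_le (by omega)

lemma abs_cb_le (n : ℕ) : |cb n| ≤ ((n.factorial : ℝ))⁻¹ := by
  rw [cb, abs_mul, abs_pow, abs_neg, abs_one, one_pow, one_mul, abs_inv, abs_of_nonneg (by positivity)]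
  apply inv_anti₀ (by positivity)
  exact_mod_cast Nat.factorial_le (by omega)

lemma summable_aux (c : ℕ → ℝ) (hc : ∀ n, |c n| ≤ ((n.factorial : ℝ))⁻¹) (y : ℝ) :
    Summable fun n => c n * y ^ n := by
  refine Summable.of_norm_bounded (Real.summable_pow_div_factorial |y|) fun n => ?_
  rw [norm_mul, norm_pow, Real.norm_eq_abs, Real.norm_eq_abs]
  calc |c n| * |y| ^ n ≤ (n.factorial : ℝ)⁻¹ * |y| ^ n := by
        have := hc n; gcongr
    _ = |y| ^ n / n.factorial := by ring

lemma contDiff_tsum (c : ℕ → ℝ) (hc : ∀ n, |c n| ≤ ((n.factorial : ℝ))⁻¹) :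
    ContDiff ℝ 1 (fun s : ℝ => ∑' n : ℕ, c n * s ^ n) := by
  set p := FormalMultilinearSeries.ofScalars ℝ c with hp
  have hrad : p.radius = ⊤ := by
    apply FormalMultilinearSeries.radius_eq_top_of_summable_norm
    intro r
    refine Summable.of_norm_bounded (Real.summable_pow_div_factorial r) fun n => ?_
    have h1 : ‖p n‖ = |c n| := by
      rw [hp, FormalMultilinearSeries.ofScalars_norm, Real.norm_eq_abs]
    rw [Real.norm_eq_abs, abs_mul, h1, abs_abs, abs_pow, abs_of_nonneg r.coe_nonneg]
    calc |c n| * (r : ℝ) ^ n ≤ (n.factorial : ℝ)⁻¹ * (r : ℝ) ^ n := by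
          have := hc n; gcongr
      _ = (r : ℝ) ^ n / n.factorial := by ring
  have hball : HasFPowerSeriesOnBall (fun s : ℝ => ∑' n : ℕ, c n * s ^ n) p 0 ⊤ := by
    refine ⟨hrad.ge, by simp, fun {y} _ => ?_⟩
    simp only [hp, FormalMultilinearSeries.ofScalars_apply_eq, smul_eq_mul, zero_add]
    exact (summable_aux c hc y).hasSum
  refine contDiff_iff_contDiffAt.mpr fun y => ?_
  exact (hball.analyticAt_of_mem (by simp [EMetric.mem_ball, edist_lt_top])).contDiffAt

lemma hat_cube (v : Fin 3 → ℝ) : hat v ^ 3 = (-(v ⬝ᵥ v)) • hat v := by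
  ext i j
  fin_cases i <;> fin_cases j <;>
    simp [hat, pow_succ, Matrix.mul_apply, Fin.sum_univ_three, dotProduct,
      Matrix.smul_apply] <;> ring

lemma hat_pow_odd (v : Fin 3 → ℝ) (k : ℕ) :
    hat v ^ (2 * k + 1) = ((-(v ⬝ᵥ v)) ^ k) • hat v := by
  induction k with
  | zero => simp
  | succ n ih =>
    rw [show 2 * (n + 1) + 1 = (2 * n + 1) + 2 by ring, pow_add, ih, Matrix.smul_mul,
      show hat v * hat v ^ 2 = hat v ^ 3 from (pow_succ' _ 2).symm, hat_cube, smul_smul, ← pow_succ]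

lemma hat_pow_even (v : Fin 3 → ℝ) (k : ℕ) :
    hat v ^ (2 * k + 2) = ((-(v ⬝ᵥ v)) ^ k) • hat v ^ 2 := by
  rw [show 2 * k + 2 = (2 * k + 1) + 1 by ring, pow_succ, hat_pow_odd, Matrix.smul_mul, pow_two]

def gmat (v : Fin 3 → ℝ) : Matrix (Fin 3) (Fin 3) ℝ :=
  (1 : Matrix (Fin 3) (Fin 3) ℝ) + fa (v ⬝ᵥ v) • hat v + fb (v ⬝ᵥ v) • hat v ^ 2

lemma leftJacobian_hat (v : Fin 3 → ℝ) : leftJacobian (hat v) = gmat v := by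
  set X := hat v with hX
  set q := v ⬝ᵥ v with hq
  have hodd : HasSum (fun j : ℕ => ((Nat.factorial (2 * j + 1 + 1) : ℝ))⁻¹ • X ^ (2 * j + 1))
      (fa q • X) := by
    have hs : HasSum (fun j : ℕ => ca j * q ^ j) (fa q) := (summable_aux ca abs_ca_le q).hasSum
    have h2 := hs.smul_const X
    have hfun : (fun j : ℕ => (ca j * q ^ j) • X)
        = fun j : ℕ => ((Nat.factorial (2 * j + 1 + 1) : ℝ))⁻¹ • X ^ (2 * j + 1) := by
      funext j
      rw [hX, hat_pow_odd, smul_smul, ← hX]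
      congr 1
      rw [show 2 * j + 1 + 1 = 2 * j + 2 by ring, ca, neg_pow]
      ring
    rwa [hfun] at h2
  have heven : HasSum (fun j : ℕ => ((Nat.factorial (2 * j + 1 + 1 + 1) : ℝ))⁻¹ • X ^ (2 * j + 1 + 1))
      (fb q • X ^ 2) := by
    have hs : HasSum (fun j : ℕ => cb j * q ^ j) (fb q) := (summable_aux cb abs_cb_le q).hasSum
    have h2 := hs.smul_const (X ^ 2)
    have hfun : (fun j : ℕ => (cb j * q ^ j) • X ^ 2)
        = fun j : ℕ => ((Nat.factorial (2 * j + 1 + 1 + 1) : ℝ))⁻¹ • X ^ (2 * j + 1 + 1) := by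
      funext j
      rw [show 2 * j + 1 + 1 = 2 * j + 2 by ring, hX, hat_pow_even, smul_smul, ← hX]
      congr 1
      rw [show 2 * j + 1 + 1 + 1 = 2 * j + 3 by ring, cb, neg_pow]
      ring
    rwa [hfun] at h2
  have h1 : HasSum (fun k : ℕ => ((Nat.factorial (k + 1 + 1) : ℝ))⁻¹ • X ^ (k + 1))
      (fa q • X + fb q • X ^ 2) := HasSum.even_add_odd hodd heven
  have h0 := (hasSum_nat_add_iff
    (f := fun k : ℕ => ((Nat.factorial (k + 1) : ℝ))⁻¹ • X ^ k) 1).mp h1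
  norm_num at h0
  rw [leftJacobian, h0.tsum_eq, gmat, ← hq, ← hX]
  abel

lemma fa_eq (t : ℝ) (ht : t ≠ 0) : fa (t ^ 2) = (1 - Real.cos t) / t ^ 2 := by
  have h1 : HasSum (fun n : ℕ => ((-1 : ℝ)) ^ (n + 1) * t ^ (2 * (n + 1)) / (2 * (n + 1)).factorial)
      (Real.cos t - 1) := by
    refine (hasSum_nat_add_iff
      (f := fun n : ℕ => ((-1 : ℝ)) ^ n * t ^ (2 * n) / (2 * n).factorial) 1).mpr ?_
    simpa using Real.hasSum_cos t
  have h3 := h1.mul_left (-(t ^ 2))⁻¹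
  have hfun : (fun n : ℕ => (-(t ^ 2))⁻¹ *
        (((-1 : ℝ)) ^ (n + 1) * t ^ (2 * (n + 1)) / (2 * (n + 1)).factorial))
      = fun n : ℕ => ca n * (t ^ 2) ^ n := by
    funext n
    rw [ca, show 2 * (n + 1) = 2 * n + 2 by ring, ← pow_mul,
      show 2 * n + 2 = 2 + 2 * n by ring, pow_add, pow_succ]
    have : ((2 * n + 2).factorial : ℝ) ≠ 0 := by positivity
    field_simp
    ring
  have hv : (-(t ^ 2))⁻¹ * (Real.cos t - 1) = (1 - Real.cos t) / t ^ 2 := by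
    field_simp
    ring
  rw [hfun, hv] at h3
  rw [fa, h3.tsum_eq]

lemma fb_eq (t : ℝ) (ht : t ≠ 0) : fb (t ^ 2) = (t - Real.sin t) / t ^ 3 := by
  have h1 : HasSum (fun n : ℕ => ((-1 : ℝ)) ^ (n + 1) * t ^ (2 * (n + 1) + 1) / (2 * (n + 1) + 1).factorial)
      (Real.sin t - t) := by
    refine (hasSum_nat_add_iff
      (f := fun n : ℕ => ((-1 : ℝ)) ^ n * t ^ (2 * n + 1) / (2 * n + 1).factorial) 1).mpr ?_
    simpa using Real.hasSum_sin t
  have h3 := h1.mul_left (-(t ^ 3))⁻¹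
  have hfun : (fun n : ℕ => (-(t ^ 3))⁻¹ *
        (((-1 : ℝ)) ^ (n + 1) * t ^ (2 * (n + 1) + 1) / (2 * (n + 1) + 1).factorial))
      = fun n : ℕ => cb n * (t ^ 2) ^ n := by
    funext n
    rw [cb, show 2 * (n + 1) + 1 = 2 * n + 3 by ring, ← pow_mul,
      show t ^ (2 * n + 3) = t ^ 3 * t ^ (2 * n) by rw [← pow_add]; ring_nf, pow_succ]
    have : ((2 * n + 3).factorial : ℝ) ≠ 0 := by positivity
    field_simp
    ring
  have hv : (-(t ^ 3))⁻¹ * (Real.sin t - t) = (t - Real.sin t) / t ^ 3 := by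
    field_simp
    ring
  rw [hfun, hv] at h3
  rw [fb, h3.tsum_eq]

lemma det_gmat (v : Fin 3 → ℝ) (a b : ℝ) :
    ((1 : Matrix (Fin 3) (Fin 3) ℝ) + a • hat v + b • hat v ^ 2).det
      = (1 - (v ⬝ᵥ v) * b) ^ 2 + a ^ 2 * (v ⬝ᵥ v) := by
  simp [Matrix.det_fin_three, hat, Matrix.one_fin_three, Matrix.add_apply, Matrix.smul_apply,
    pow_two, Matrix.mul_apply, Fin.sum_univ_three, dotProduct]
  ring

lemma dot_nonneg (v : Fin 3 → ℝ) : 0 ≤ v ⬝ᵥ v :=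
  Finset.sum_nonneg fun i _ => mul_self_nonneg (v i)

lemma det_pos (v : Fin 3 → ℝ) (hv : v ⬝ᵥ v < (2 * Real.pi) ^ 2) :
    0 < (1 - (v ⬝ᵥ v) * fb (v ⬝ᵥ v)) ^ 2 + (fa (v ⬝ᵥ v)) ^ 2 * (v ⬝ᵥ v) := by
  rcases eq_or_lt_of_le (dot_nonneg v) with h0 | hpos
  · rw [← h0]; norm_num
  · set q := v ⬝ᵥ v with hq
    have ht0 : 0 < Real.sqrt q := Real.sqrt_pos.mpr hpos
    have ht2 : Real.sqrt q ^ 2 = q := Real.sq_sqrt hpos.le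
    set t := Real.sqrt q with ht
    have htlt : t < 2 * Real.pi := by
      rw [ht]
      exact (Real.sqrt_lt' (by positivity)).mpr hv
    have hcos : Real.cos t < 1 := by
      refine lt_of_le_of_ne (Real.cos_le_one t) fun h => ht0.ne' ?_
      exact (Real.cos_eq_one_iff_of_lt_of_lt (by linarith [Real.pi_pos]) htlt).mp h
    rw [← ht2, fa_eq t ht0.ne', fb_eq t ht0.ne']
    have e1 : 1 - t ^ 2 * ((t - Real.sin t) / t ^ 3) = Real.sin t / t := by
      field_simp; ring
    have e2 : ((1 - Real.cos t) / t ^ 2) ^ 2 * t ^ 2 = ((1 - Real.cos t) / t) ^ 2 := by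
      field_simp
    rw [e1, e2]
    have h2 : 0 < ((1 - Real.cos t) / t) ^ 2 := pow_pos (div_pos (by linarith) ht0) 2
    exact add_pos_of_nonneg_of_pos (sq_nonneg _) h2

lemma gmat_det_eq (v : Fin 3 → ℝ) :
    (gmat v).det = (1 - (v ⬝ᵥ v) * fb (v ⬝ᵥ v)) ^ 2 + (fa (v ⬝ᵥ v)) ^ 2 * (v ⬝ᵥ v) :=
  det_gmat v _ _

end LJAux

open LJAux

theorem leftJacobian_inverse_differentiable
    (x : ℝ → Fin 3 → ℝ) (x' : ℝ → Fin 3 → ℝ)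
    -- `x ∈ C¹(ℝ, ℝ³)`:
    (hx : ∀ t : ℝ, HasDerivAt x (x' t) t) (hx' : Continuous x') :
    (∀ t₀ : ℝ, Real.sqrt (x t₀ ⬝ᵥ x t₀) < 2 * Real.pi →
      IsUnit (leftJacobian (hat (x t₀))) ∧
      DifferentiableAt ℝ (fun t => (leftJacobian (hat (x t)))⁻¹) t₀) ∧
    ContinuousOn (fun t => deriv (fun s => (leftJacobian (hat (x s)))⁻¹) t)
      {t : ℝ | Real.sqrt (x t ⬝ᵥ x t) < 2 * Real.pi} := by
  classical
  have hxC : ContDiff ℝ 1 x := contDiff_one_iff_deriv.mpr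
    ⟨fun t => (hx t).differentiableAt, by
      have h : deriv x = x' := funext fun t => (hx t).deriv
      rw [h]; exact hx'⟩
  have hxi : ∀ i, ContDiff ℝ 1 fun t => x t i := fun i => contDiff_pi.mp hxC i
  have hqC : ContDiff ℝ 1 fun t => x t ⬝ᵥ x t := by
    simp only [dotProduct, Fin.sum_univ_three]
    exact (((hxi 0).mul (hxi 0)).add ((hxi 1).mul (hxi 1))).add ((hxi 2).mul (hxi 2))
  have hfaC : ContDiff ℝ 1 fun t => fa (x t ⬝ᵥ x t) :=
    (contDiff_tsum ca abs_ca_le).comp hqC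
  have hfbC : ContDiff ℝ 1 fun t => fb (x t ⬝ᵥ x t) :=
    (contDiff_tsum cb abs_cb_le).comp hqC
  have hhat : ∀ i j, ContDiff ℝ 1 fun t => hat (x t) i j := by
    intro i j
    fin_cases i <;> fin_cases j <;> simp [hat] <;>
      first
      | exact contDiff_const
      | exact hxi _
      | exact (hxi _).neg
  have hhat2 : ∀ i j, ContDiff ℝ 1 fun t => (hat (x t) ^ 2) i j := by
    intro i j
    have h : ∀ t, (hat (x t) ^ 2) i j
        = ∑ k : Fin 3, hat (x t) i k * hat (x t) k j := fun t => by
      rw [pow_two, Matrix.mul_apply]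
    simp only [h, Fin.sum_univ_three]
    exact (((hhat i 0).mul (hhat 0 j)).add ((hhat i 1).mul (hhat 1 j))).add
      ((hhat i 2).mul (hhat 2 j))
  have hgij : ∀ i j, ContDiff ℝ 1 fun t => gmat (x t) i j := by
    intro i j
    simp only [gmat, Matrix.add_apply, Matrix.smul_apply, smul_eq_mul]
    exact (contDiff_const.add (hfaC.mul (hhat i j))).add (hfbC.mul (hhat2 i j))
  have hdetC : ContDiff ℝ 1 fun t => (gmat (x t)).det := by
    simp only [Matrix.det_fin_three]
    exact ((((((hgij 0 0).mul (hgij 1 1)).mul (hgij 2 2)).sub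
      (((hgij 0 0).mul (hgij 1 2)).mul (hgij 2 1))).sub
      (((hgij 0 1).mul (hgij 1 0)).mul (hgij 2 2))).add
      (((hgij 0 1).mul (hgij 1 2)).mul (hgij 2 0))).add
      (((hgij 0 2).mul (hgij 1 0)).mul (hgij 2 1)) |>.sub
      (((hgij 0 2).mul (hgij 1 1)).mul (hgij 2 0))
  have hadjC : ContDiff ℝ 1 fun t => (gmat (x t)).adjugate := by
    refine contDiff_pi.mpr fun i => contDiff_pi.mpr fun j => ?_
    fin_cases i <;> fin_cases j <;>
      simp only [Matrix.adjugate_fin_three, Matrix.cons_val', Matrix.cons_val_zero,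
        Matrix.cons_val_one, Matrix.head_cons, Matrix.empty_val', Matrix.cons_val_fin_one,
        Matrix.head_fin_const] <;>
      first
      | exact ((hgij _ _).mul (hgij _ _)).sub ((hgij _ _).mul (hgij _ _))
      | exact (((hgij _ _).mul (hgij _ _)).neg).add ((hgij _ _).mul (hgij _ _))
  set S : Set ℝ := {t : ℝ | Real.sqrt (x t ⬝ᵥ x t) < 2 * Real.pi} with hS
  have hSopen : IsOpen S := by
    have hc : Continuous fun t => Real.sqrt (x t ⬝ᵥ x t) :=
      Real.continuous_sqrt.comp hqC.continuous
    exact isOpen_lt hc continuous_const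
  have hmem : ∀ t ∈ S, x t ⬝ᵥ x t < (2 * Real.pi) ^ 2 := fun t ht =>
    (Real.sqrt_lt' (by positivity)).mp ht
  have hdet_pos : ∀ t ∈ S, 0 < (gmat (x t)).det := by
    intro t ht
    rw [gmat_det_eq]
    exact det_pos _ (hmem t ht)
  have hdet_ne : ∀ t ∈ S, (gmat (x t)).det ≠ 0 := fun t ht => (hdet_pos t ht).ne'
  have hF : (fun t => (leftJacobian (hat (x t)))⁻¹)
      = fun t => ((gmat (x t)).det)⁻¹ • (gmat (x t)).adjugate := by
    funext t
    rw [leftJacobian_hat, Matrix.inv_def, Ring.inverse_eq_inv]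
  have hFcd : ContDiffOn ℝ 1 (fun t => ((gmat (x t)).det)⁻¹ • (gmat (x t)).adjugate) S :=
    (hdetC.contDiffOn.inv hdet_ne).smul hadjC.contDiffOn
  constructor
  · intro t₀ ht₀
    have ht₀S : t₀ ∈ S := ht₀
    refine ⟨?_, ?_⟩
    · rw [leftJacobian_hat, Matrix.isUnit_iff_isUnit_det]
      exact (hdet_pos t₀ ht₀S).ne'.isUnit
    · rw [hF]
      exact (hFcd.differentiableOn one_ne_zero).differentiableAt (hSopen.mem_nhds ht₀S)
  · simp only [hF]
    exact hFcd.continuousOn_deriv_of_isOpen hSopen le_rfl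
end
end

section
/- For every x ∈ ℝ³ with ‖x‖ < 2π, the left Jacobian matrix J_ℓ(x^∧) = Σ_{n≥0} (x^∧)ⁿ/(n+1)! ∈ ℝ^{3×3} is invertible. -/
/-!
STATEMENT 17: for every `x ∈ ℝ³` with `‖x‖ < 2π`, the left Jacobian matrix
`J_ℓ(x^∧) = Σ_{k≥0} (x^∧)ᵏ/(k+1)!` is invertible.
-/

open Matrix

noncomputable section

attribute [local instance] Matrix.linftyOpNormedRing Matrix.linftyOpNormedAlgebra

lemma hat_sq (x : Fin 3 → ℝ) :
    hat x ^ 2 = !![-(x 1 ^ 2 + x 2 ^ 2), x 0 * x 1, x 0 * x 2;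
      x 0 * x 1, -(x 0 ^ 2 + x 2 ^ 2), x 1 * x 2;
      x 0 * x 2, x 1 * x 2, -(x 0 ^ 2 + x 1 ^ 2)] := by
  ext i j
  fin_cases i <;> fin_cases j <;>
    simp [hat, pow_two, Matrix.mul_apply, Fin.sum_univ_three] <;> ring

lemma hat_cube (x : Fin 3 → ℝ) :
    hat x ^ 3 = (-(x ⬝ᵥ x)) • hat x := by
  have : hat x ^ 3 = hat x ^ 2 * hat x := by rw [pow_succ]
  rw [this, hat_sq]
  ext i j
  fin_cases i <;> fin_cases j <;>
    simp [hat, Matrix.mul_apply, Fin.sum_univ_three, dotProduct] <;> ring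

lemma hat_pow_odd (x : Fin 3 → ℝ) (k : ℕ) :
    hat x ^ (2 * k + 1) = (-(x ⬝ᵥ x)) ^ k • hat x := by
  induction k with
  | zero => simp
  | succ n ih =>
    have h : 2 * (n + 1) + 1 = (2 * n + 1) + 2 := by ring
    rw [h, pow_add, ih, smul_mul_assoc, ← pow_succ' (hat x) 2, hat_cube, smul_smul, ← pow_succ]

lemma hat_pow_even (x : Fin 3 → ℝ) (k : ℕ) :
    hat x ^ (2 * k + 2) = (-(x ⬝ᵥ x)) ^ k • hat x ^ 2 := by
  have h : 2 * k + 2 = (2 * k + 1) + 1 := by ring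
  rw [h, pow_succ, hat_pow_odd, smul_mul_assoc, ← pow_two]

lemma summable_aux (X : Matrix (Fin 3) (Fin 3) ℝ) :
    Summable (fun k : ℕ => ((Nat.factorial (k + 1) : ℝ)⁻¹) • X ^ k) := by
  apply Summable.of_norm_bounded (Real.summable_pow_div_factorial ‖X‖)
  intro k
  rw [norm_smul]
  have h1 : ‖X ^ k‖ ≤ ‖X‖ ^ k := norm_pow_le X k
  have h2 : ‖((Nat.factorial (k + 1) : ℝ)⁻¹)‖ ≤ (Nat.factorial k : ℝ)⁻¹ := by
    rw [Real.norm_eq_abs, abs_inv, abs_of_nonneg (by positivity)]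
    apply inv_anti₀ (by positivity)
    exact_mod_cast Nat.factorial_le (Nat.le_succ k)
  calc ‖((Nat.factorial (k + 1) : ℝ)⁻¹)‖ * ‖X ^ k‖
      ≤ (Nat.factorial k : ℝ)⁻¹ * ‖X‖ ^ k := by
        apply mul_le_mul h2 h1 (norm_nonneg _) (by positivity)
    _ = ‖X‖ ^ k / (Nat.factorial k : ℝ) := by rw [div_eq_mul_inv, mul_comm]

lemma summable_scalar_aux (t : ℝ) (c : ℕ → ℕ) (hc : ∀ k, k ≤ c k) :
    Summable (fun k : ℕ => (-t) ^ k * ((Nat.factorial (c k) : ℝ)⁻¹)) := by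
  apply Summable.of_norm_bounded (Real.summable_pow_div_factorial |t|)
  intro k
  rw [norm_mul, norm_pow, norm_neg, Real.norm_eq_abs, Real.norm_eq_abs, abs_inv,
    abs_of_nonneg (by positivity : (0:ℝ) ≤ (Nat.factorial (c k) : ℝ))]
  rw [div_eq_mul_inv]
  apply mul_le_mul le_rfl _ (by positivity) (by positivity)
  apply inv_anti₀ (by positivity)
  exact_mod_cast Nat.factorial_le (hc k)

/-- closed form of the left Jacobian -/
lemma leftJacobian_eq (x : Fin 3 → ℝ) :
    leftJacobian (hat x) =
      (1 : Matrix (Fin 3) (Fin 3) ℝ)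
      + (∑' k : ℕ, (-(x ⬝ᵥ x)) ^ k * ((Nat.factorial (2 * k + 2) : ℝ)⁻¹)) • hat x
      + (∑' k : ℕ, (-(x ⬝ᵥ x)) ^ k * ((Nat.factorial (2 * k + 3) : ℝ)⁻¹)) • hat x ^ 2 := by
  set t := x ⬝ᵥ x
  set g : ℕ → Matrix (Fin 3) (Fin 3) ℝ := fun k => ((Nat.factorial (k + 1) : ℝ)⁻¹) • hat x ^ k
    with hg
  have hgs : Summable g := summable_aux (hat x)
  have h0 : leftJacobian (hat x) = g 0 + ∑' k, g (k + 1) := Summable.tsum_eq_zero_add hgs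
  have hgs' : Summable (fun k => g (k + 1)) := (summable_nat_add_iff 1).2 hgs
  have heven : Summable fun k => g (2 * k + 1) :=
    hgs'.comp_injective (fun a b h => by dsimp at h; omega : Function.Injective (fun k => 2 * k))
  have hodd : Summable fun k => g (2 * k + 2) :=
    hgs'.comp_injective (fun a b h => by dsimp at h; omega : Function.Injective (fun k => 2 * k + 1))
  have hsplit : ∑' k, g (k + 1) = (∑' k, g (2 * k + 1)) + ∑' k, g (2 * k + 2) := by
    have := tsum_even_add_odd (f := fun k => g (k + 1)) heven hodd
    simpa using this.symm
  have he : ∑' k, g (2 * k + 1)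
      = (∑' k : ℕ, (-t) ^ k * ((Nat.factorial (2 * k + 2) : ℝ)⁻¹)) • hat x := by
    rw [← Summable.tsum_smul_const (summable_scalar_aux t _ (fun k => by omega))]
    apply tsum_congr
    intro k
    rw [hg]
    simp only [hat_pow_odd, smul_smul]
    congr 1
    ring_nf
    rfl
  have ho : ∑' k, g (2 * k + 2)
      = (∑' k : ℕ, (-t) ^ k * ((Nat.factorial (2 * k + 3) : ℝ)⁻¹)) • hat x ^ 2 := by
    rw [← Summable.tsum_smul_const (summable_scalar_aux t _ (fun k => by omega))]
    apply tsum_congr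
    intro k
    rw [hg]
    simp only [hat_pow_even, smul_smul]
    congr 1
    · ring_nf
      rfl
  have hg0 : g 0 = 1 := by simp [hg]
  rw [h0, hsplit, hg0, he, ho, add_assoc]

lemma cos_sqrt_eq (t : ℝ) (ht : 0 ≤ t) :
    Real.cos (Real.sqrt t)
      = 1 - t * ∑' k : ℕ, (-t) ^ k * ((Nat.factorial (2 * k + 2) : ℝ)⁻¹) := by
  have hsq : ∀ n : ℕ, Real.sqrt t ^ (2 * n) = t ^ n := by
    intro n
    rw [pow_mul, Real.sq_sqrt ht]
  have h1 : Real.cos (Real.sqrt t) = ∑' n : ℕ, (-t) ^ n * ((Nat.factorial (2 * n) : ℝ)⁻¹) := by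
    rw [Real.cos_eq_tsum]
    apply tsum_congr
    intro n
    rw [hsq, div_eq_mul_inv, neg_pow t n]
    try ring
  rw [h1, Summable.tsum_eq_zero_add (summable_scalar_aux t _ (fun k => by omega))]
  have h2 : ∑' n : ℕ, (-t) ^ (n + 1) * ((Nat.factorial (2 * (n + 1)) : ℝ)⁻¹)
      = -t * ∑' k : ℕ, (-t) ^ k * ((Nat.factorial (2 * k + 2) : ℝ)⁻¹) := by
    rw [← tsum_mul_left]
    apply tsum_congr
    intro n
    have : 2 * (n + 1) = 2 * n + 2 := by ring
    rw [this, pow_succ]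
    ring
  rw [h2]
  norm_num
  ring

lemma sin_sqrt_eq (t : ℝ) (ht : 0 ≤ t) :
    Real.sin (Real.sqrt t)
      = Real.sqrt t * (1 - t * ∑' k : ℕ, (-t) ^ k * ((Nat.factorial (2 * k + 3) : ℝ)⁻¹)) := by
  have hsq : ∀ n : ℕ, Real.sqrt t ^ (2 * n + 1) = Real.sqrt t * t ^ n := by
    intro n
    rw [pow_succ, pow_mul, Real.sq_sqrt ht, mul_comm]
  have h1 : Real.sin (Real.sqrt t)
      = Real.sqrt t * ∑' n : ℕ, (-t) ^ n * ((Nat.factorial (2 * n + 1) : ℝ)⁻¹) := by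
    rw [Real.sin_eq_tsum, ← tsum_mul_left]
    apply tsum_congr
    intro n
    rw [hsq, div_eq_mul_inv, neg_pow t n]
    try ring
  rw [h1, Summable.tsum_eq_zero_add (summable_scalar_aux t _ (fun k => by omega))]
  have h2 : ∑' n : ℕ, (-t) ^ (n + 1) * ((Nat.factorial (2 * (n + 1) + 1) : ℝ)⁻¹)
      = -t * ∑' k : ℕ, (-t) ^ k * ((Nat.factorial (2 * k + 3) : ℝ)⁻¹) := by
    rw [← tsum_mul_left]
    apply tsum_congr
    intro n
    have : 2 * (n + 1) + 1 = 2 * n + 3 := by ring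
    rw [this, pow_succ]
    ring
  rw [h2]
  norm_num
  exact Or.inl (by ring)

theorem leftJacobian_isUnit (x : Fin 3 → ℝ)
    (hx : Real.sqrt (x ⬝ᵥ x) < 2 * Real.pi) :
    IsUnit (leftJacobian (hat x)) := by
  set t := x ⬝ᵥ x with ht
  have htt : t = x 0 * x 0 + x 1 * x 1 + x 2 * x 2 := by
    simp [ht, dotProduct, Fin.sum_univ_three]
  have ht0 : 0 ≤ t := by nlinarith [sq_nonneg (x 0), sq_nonneg (x 1), sq_nonneg (x 2)]
  set a := ∑' k : ℕ, (-t) ^ k * ((Nat.factorial (2 * k + 2) : ℝ)⁻¹) with hadef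
  set b := ∑' k : ℕ, (-t) ^ k * ((Nat.factorial (2 * k + 3) : ℝ)⁻¹) with hbdef
  have ha : t * a = 1 - Real.cos (Real.sqrt t) := by
    rw [cos_sqrt_eq t ht0]; ring
  have hb : Real.sqrt t * (1 - t * b) = Real.sin (Real.sqrt t) := by
    rw [sin_sqrt_eq t ht0]
  have hJ : leftJacobian (hat x) =
      !![1 - b * (x 1 ^ 2 + x 2 ^ 2), -(a * x 2) + b * (x 0 * x 1), a * x 1 + b * (x 0 * x 2);
        a * x 2 + b * (x 0 * x 1), 1 - b * (x 0 ^ 2 + x 2 ^ 2), -(a * x 0) + b * (x 1 * x 2);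
        -(a * x 1) + b * (x 0 * x 2), a * x 0 + b * (x 1 * x 2), 1 - b * (x 0 ^ 2 + x 1 ^ 2)] := by
    rw [leftJacobian_eq, ← hadef, ← hbdef, hat_sq]
    ext i j
    fin_cases i <;> fin_cases j <;>
      simp [hat, Matrix.add_apply, Matrix.smul_apply, Matrix.one_apply] <;> ring
  have hdet : (leftJacobian (hat x)).det = (1 - t * b) ^ 2 + a ^ 2 * t := by
    rw [hJ, Matrix.det_fin_three, htt]
    simp
    ring
  rw [Matrix.isUnit_iff_isUnit_det, isUnit_iff_ne_zero, hdet]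
  rcases eq_or_lt_of_le ht0 with h0 | hpos
  · rw [← h0]
    norm_num
  · have hsp : 0 < Real.sqrt t := Real.sqrt_pos.2 hpos
    have hcos : Real.cos (Real.sqrt t) ≠ 1 := by
      intro hone
      exact hsp.ne'
        ((Real.cos_eq_one_iff_of_lt_of_lt (by linarith [Real.two_pi_pos]) hx).mp hone)
    have hcos2 : Real.cos (Real.sqrt t) < 1 :=
      lt_of_le_of_ne (Real.cos_le_one _) hcos
    have hapos : 0 < a := by
      have h : 0 < t * a := by rw [ha]; linarith
      nlinarith
    have h2 : 0 < a ^ 2 * t := mul_pos (pow_pos hapos 2) hpos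
    nlinarith [sq_nonneg (1 - t * b)]
end
end
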